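/- Let k be a finite field, Q a Dynkin quiver, and N ∈ R_d block-diagonal with blocks N_s satisfying Hom_Q(N_t, N_s) = 0 for s < t. Let U_d be the unipotent radical of the parabolic stabilizing the standard flag, acting on the affine space Y_N = N + Y_N^0 (representations compatible with the flag and inducing N_s on subquotients). If E_N is a complement of φ(u_d) in Y_N compatible with the block decomposition of R_d, then every U_d-orbit in Y_N meets E_N in exactly one point; in particular the U_d-action on Y_N is free and |E_N| = |Y_N|/|U_d|. -/

import Mathlib

section QuiverRep

variable {k : Type} [Field k] {I A : Type} (src tgt : A → I)

/-- The space `R_d` of representations of the quiver `(I, A, src, tgt)` of dimension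
vector `d`, in coordinates. -/
abbrev CRep (k : Type) [Field k] (d : I → ℕ) : Type :=
  ∀ a : A, Matrix (Fin (d (tgt a))) (Fin (d (src a))) k

/-- The group `G_d = ∏_i GL_{d_i}(k)`. -/
abbrev Gd (k : Type) [Field k] (d : I → ℕ) : Type := ∀ i : I, GL (Fin (d i)) k

/-- The action of `G_d` on `R_d`: `(g·M)_α = g_{h(α)} M_α g_{i(α)}⁻¹`. -/
def gact {d : I → ℕ} (g : Gd k d) (M : CRep src tgt k d) : CRep src tgt k d :=
  fun a => (g (tgt a) : Matrix (Fin (d (tgt a))) (Fin (d (tgt a))) k) * M a *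
    (((g (src a))⁻¹ : GL (Fin (d (src a))) k) : Matrix (Fin (d (src a))) (Fin (d (src a))) k)

/-- The `G_d`-orbit `O_M` of `M` in `R_d`. -/
def orbit {d : I → ℕ} (M : CRep src tgt k d) : Set (CRep src tgt k d) :=
  Set.range (fun g : Gd k d => gact src tgt g M)

/-- `|Aut(M)| = |Stab_{G_d}(M)|`, the number of automorphisms of a representation. -/
noncomputable def autCard {d : I → ℕ} (M : CRep src tgt k d) : ℕ :=
  {g : Gd k d | gact src tgt g M = M}.ncard

/-- A family of graded subspaces is a subrepresentation of `M`. -/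
def IsSubrep {d : I → ℕ} (M : CRep src tgt k d)
    (W : ∀ i : I, Submodule k (Fin (d i) → k)) : Prop :=
  ∀ a : A, (W (src a)).map (M a).mulVecLin ≤ W (tgt a)

/-- The subrepresentation of `M` carried by an invariant family `W` is isomorphic, as a
representation of the quiver, to the coordinate representation `P` (of dim vector `d₂`). -/
def SubIsoTo {d d₂ : I → ℕ} (M : CRep src tgt k d)
    (W : ∀ i : I, Submodule k (Fin (d i) → k)) (P : CRep src tgt k d₂) : Prop :=
  ∃ g : ∀ i : I, ↥(W i) ≃ₗ[k] (Fin (d₂ i) → k),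
    ∀ (a : A) (x : ↥(W (src a))) (hx : (M a).mulVecLin ↑x ∈ W (tgt a)),
      g (tgt a) ⟨(M a).mulVecLin ↑x, hx⟩ = (P a).mulVecLin (g (src a) x)

/-- The quotient of `M` by an invariant family `W` is isomorphic, as a representation of the
quiver, to the coordinate representation `P` (of dim vector `d₂`). -/
def QuotIsoTo {d d₂ : I → ℕ} (M : CRep src tgt k d)
    (W : ∀ i : I, Submodule k (Fin (d i) → k)) (P : CRep src tgt k d₂) : Prop :=
  ∃ g : ∀ i : I, ((Fin (d i) → k) ⧸ W i) ≃ₗ[k] (Fin (d₂ i) → k),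
    ∀ (a : A) (x : Fin (d (src a)) → k),
      g (tgt a) (Submodule.Quotient.mk ((M a).mulVecLin x))
        = (P a).mulVecLin (g (src a) (Submodule.Quotient.mk x))

/-- Isomorphism of two coordinate representations (possibly of different dim vectors). -/
def CIso {d₁ d₂ : I → ℕ} (M₁ : CRep src tgt k d₁) (M₂ : CRep src tgt k d₂) : Prop :=
  ∃ g : ∀ i : I, (Fin (d₁ i) → k) ≃ₗ[k] (Fin (d₂ i) → k),
    ∀ (a : A) (x : Fin (d₁ (src a)) → k),
      g (tgt a) ((M₁ a).mulVecLin x) = (M₂ a).mulVecLin (g (src a) x)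

/-- `Fl` is a filtration `0 = M^ν ⊆ … ⊆ M^1 ⊆ M^0 = M` by subrepresentations whose
subquotients satisfy `M^s/M^{s+1} ≅ N_{s+1}` (where `Ns s` here denotes `N_{s+1}`). -/
def IsFiltrationOfType {d : I → ℕ} (M : CRep src tgt k d) (ν : ℕ) (ds : ℕ → I → ℕ)
    (Ns : ∀ s : ℕ, CRep src tgt k (ds s))
    (Fl : ℕ → ∀ i : I, Submodule k (Fin (d i) → k)) : Prop :=
  (∀ i, Fl 0 i = ⊤) ∧ (∀ i, Fl ν i = ⊥) ∧
  (∀ (s : ℕ) (i : I), Fl (s + 1) i ≤ Fl s i) ∧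
  (∀ s : ℕ, IsSubrep src tgt M (Fl s)) ∧
  (∀ s : ℕ, s < ν →
    ∃ g : ∀ i : I,
        (↥(Fl s i) ⧸ (Fl (s + 1) i).comap (Fl s i).subtype) ≃ₗ[k] (Fin (ds s i) → k),
      ∀ (a : A) (x : ↥(Fl s (src a))) (hx : (M a).mulVecLin ↑x ∈ Fl s (tgt a)),
        g (tgt a) (Submodule.Quotient.mk ⟨(M a).mulVecLin ↑x, hx⟩)
          = (Ns s a).mulVecLin (g (src a) (Submodule.Quotient.mk x)))

/-- The set of filtrations of `M` of type `(N_ν, …, N_1)`. -/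
def filtSet {d : I → ℕ} (M : CRep src tgt k d) (ν : ℕ) (ds : ℕ → I → ℕ)
    (Ns : ∀ s : ℕ, CRep src tgt k (ds s)) :
    Set (ℕ → ∀ i : I, Submodule k (Fin (d i) → k)) :=
  {Fl | IsFiltrationOfType src tgt M ν ds Ns Fl}

/-- A representation is indecomposable: it is nonzero, and any decomposition of the underlying
graded space into two complementary subrepresentations is trivial. -/
def IndecompRep {d : I → ℕ} (M : CRep src tgt k d) : Prop :=
  (∃ i, d i ≠ 0) ∧
  ∀ W₁ W₂ : ∀ i : I, Submodule k (Fin (d i) → k),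
    IsSubrep src tgt M W₁ → IsSubrep src tgt M W₂ → (∀ i, IsCompl (W₁ i) (W₂ i)) →
      (∀ i, W₁ i = ⊥) ∨ (∀ i, W₂ i = ⊥)

/-- `M` is isomorphic to the `m`-th power `P^{⊕ m}` of the representation `P`. -/
def IsoToPower {d dP : I → ℕ} (M : CRep src tgt k d) (P : CRep src tgt k dP) (m : ℕ) : Prop :=
  ∃ g : ∀ i : I, (Fin (d i) → k) ≃ₗ[k] (Fin m → Fin (dP i) → k),
    ∀ (a : A) (x : Fin (d (src a)) → k) (j : Fin m),
      g (tgt a) ((M a).mulVecLin x) j = (P a).mulVecLin (g (src a) x j)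

/-- `N` is isomorphic to the direct sum `⊕_{s} N_s` of the representations `Ns s`. -/
def IsoToDirectSum {d : I → ℕ} (N : CRep src tgt k d) (ν : ℕ) (ds : ℕ → I → ℕ)
    (Ns : ∀ s : ℕ, CRep src tgt k (ds s)) : Prop :=
  ∃ g : ∀ i : I, (Fin (d i) → k) ≃ₗ[k] (∀ s : Fin ν, Fin (ds s i) → k),
    ∀ (a : A) (x : Fin (d (src a)) → k) (s : Fin ν),
      g (tgt a) ((N a).mulVecLin x) s = (Ns s a).mulVecLin (g (src a) x s)

end QuiverRep

section SliceAux

namespace SliceAux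

variable {k : Type} [Field k] {I A : Type} {src tgt : A → I} {d : I → ℕ}
variable (e : ℕ → ∀ i : I, Matrix (Fin (d i)) (Fin (d i)) k) (ν : ℕ)
variable (N : CRep src tgt k d)

/-- Insert a complete family of idempotents in the middle of a product. -/
theorem mid_expand {n p q : Type} [Fintype n] [DecidableEq n]
    (f : ℕ → Matrix n n k) (hsum : ∑ s ∈ Finset.range ν, f s = 1)
    (hid : ∀ s, f s * f s = f s)
    (X : Matrix p n k) (Y : Matrix n q k) :
    X * Y = ∑ m ∈ Finset.range ν, (X * f m) * (f m * Y) := by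
  have h0 : X * Y = (X * (1 : Matrix n n k)) * Y := by rw [Matrix.mul_one]
  rw [h0, ← hsum, Matrix.mul_sum, Matrix.sum_mul]
  refine Finset.sum_congr rfl fun m _ => ?_
  conv_rhs => rw [← Matrix.mul_assoc, Matrix.mul_assoc X, hid]

/-- Sandwich a rectangular matrix between two complete families of idempotents. -/
theorem sandwich_sum {n p : Type} [Fintype n] [Fintype p] [DecidableEq n] [DecidableEq p]
    (f : ℕ → Matrix p p k) (g : ℕ → Matrix n n k)
    (hf : ∑ s ∈ Finset.range ν, f s = 1) (hg : ∑ s ∈ Finset.range ν, g s = 1)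
    (X : Matrix p n k) :
    X = ∑ t ∈ Finset.range ν, ∑ s ∈ Finset.range ν, f t * X * g s := by
  calc X = (∑ t ∈ Finset.range ν, f t) * X * (∑ s ∈ Finset.range ν, g s) := by
        rw [hf, hg, Matrix.one_mul, Matrix.mul_one]
    _ = ∑ t ∈ Finset.range ν, ∑ s ∈ Finset.range ν, f t * X * g s := by
        rw [Matrix.sum_mul, Matrix.sum_mul]
        exact Finset.sum_congr rfl fun t _ => by rw [Matrix.mul_sum]

/-- `ξ` lives in degrees `≥ r` (blocks `(t,s)` with `s ≥ t + r`). -/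
def FB (r : ℕ) (ξ : ∀ i : I, Matrix (Fin (d i)) (Fin (d i)) k) : Prop :=
  ∀ (i : I) (s t : ℕ), s < t + r → e t i * ξ i * e s i = 0

def FR (r : ℕ) (P : CRep src tgt k d) : Prop :=
  ∀ (a : A) (s t : ℕ), s < t + r → e t (tgt a) * P a * e s (src a) = 0

def lm (ξ : ∀ i : I, Matrix (Fin (d i)) (Fin (d i)) k) (P : CRep src tgt k d) :
    CRep src tgt k d := fun a => ξ (tgt a) * P a

def rm (P : CRep src tgt k d) (ξ : ∀ i : I, Matrix (Fin (d i)) (Fin (d i)) k) :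
    CRep src tgt k d := fun a => P a * ξ (src a)

def phi (ξ : ∀ i : I, Matrix (Fin (d i)) (Fin (d i)) k) : CRep src tgt k d :=
  fun a => ξ (tgt a) * N a - N a * ξ (src a)

def pB (r : ℕ) (ξ : ∀ i : I, Matrix (Fin (d i)) (Fin (d i)) k) :
    ∀ i : I, Matrix (Fin (d i)) (Fin (d i)) k :=
  fun i => ∑ t ∈ Finset.range ν, e t i * ξ i * e (t + r) i

def pR (r : ℕ) (P : CRep src tgt k d) : CRep src tgt k d :=
  fun a => ∑ t ∈ Finset.range ν, e t (tgt a) * P a * e (t + r) (src a)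

def geom (η : ∀ i : I, Matrix (Fin (d i)) (Fin (d i)) k) :
    ∀ i : I, Matrix (Fin (d i)) (Fin (d i)) k :=
  ∑ j ∈ Finset.range ν, (-η) ^ j

theorem FB_mono {r r' : ℕ} (h : r' ≤ r) {ξ} (hξ : FB e r ξ) : FB e r' ξ :=
  fun i s t hst => hξ i s t (by omega)

theorem FR_mono {r r' : ℕ} (h : r' ≤ r) {P : CRep src tgt k d} (hP : FR e r P) : FR e r' P :=
  fun a s t hst => hP a s t (by omega)

theorem FB_add {r : ℕ} {ξ η} (hξ : FB e r ξ) (hη : FB e r η) : FB e r (ξ + η) := by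
  intro i s t hst
  simp only [Pi.add_apply, Matrix.mul_add, Matrix.add_mul, hξ i s t hst, hη i s t hst, add_zero]

theorem FB_neg {r : ℕ} {ξ} (hξ : FB e r ξ) : FB e r (-ξ) := by
  intro i s t hst
  simp only [Pi.neg_apply, Matrix.mul_neg, Matrix.neg_mul, hξ i s t hst, neg_zero]

theorem FR_add {r : ℕ} {P Q : CRep src tgt k d} (hP : FR e r P) (hQ : FR e r Q) :
    FR e r (P + Q) := by
  intro a s t hst
  simp only [Pi.add_apply, Matrix.mul_add, Matrix.add_mul, hP a s t hst, hQ a s t hst, add_zero]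

theorem FR_neg {r : ℕ} {P : CRep src tgt k d} (hP : FR e r P) : FR e r (-P) := by
  intro a s t hst
  simp only [Pi.neg_apply, Matrix.mul_neg, Matrix.neg_mul, hP a s t hst, neg_zero]

theorem FR_sub {r : ℕ} {P Q : CRep src tgt k d} (hP : FR e r P) (hQ : FR e r Q) :
    FR e r (P - Q) := by
  rw [sub_eq_add_neg]; exact FR_add e hP (FR_neg e hQ)

theorem FB_sum {r : ℕ} {J : Type} {S : Finset J}
    {f : J → ∀ i : I, Matrix (Fin (d i)) (Fin (d i)) k}
    (h : ∀ j ∈ S, FB e r (f j)) : FB e r (∑ j ∈ S, f j) := by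
  intro i s t hst
  rw [Finset.sum_apply, Matrix.mul_sum, Matrix.sum_mul]
  exact Finset.sum_eq_zero fun j hj => h j hj i s t hst

section Basic

variable (hc : ∀ i, ∑ s ∈ Finset.range ν, e s i = 1)
variable (hi : ∀ s i, e s i * e s i = e s i)
variable (ho : ∀ s t i, s ≠ t → e s i * e t i = 0)

include hc ho in
theorem e_zero {t : ℕ} (ht : ν ≤ t) (i : I) : e t i = 0 := by
  have h1 : e t i * (∑ s ∈ Finset.range ν, e s i) = e t i := by rw [hc, mul_one]
  rw [Finset.mul_sum] at h1
  rw [← h1]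
  exact Finset.sum_eq_zero fun s hs =>
    ho t s i (by have := Finset.mem_range.mp hs; omega)

include hc in
theorem eq_zero_of_FB {ξ} (h : FB e ν ξ) : ξ = 0 := by
  funext i
  rw [sandwich_sum ν (fun s => e s i) (fun s => e s i) (hc i) (hc i) (ξ i), Pi.zero_apply]
  refine Finset.sum_eq_zero fun t ht => Finset.sum_eq_zero fun s hs => ?_
  exact h i s t (by have := Finset.mem_range.mp hs; omega)

include hc in
theorem eq_zero_of_FR {P : CRep src tgt k d} (h : FR e ν P) : P = 0 := by
  funext a
  rw [sandwich_sum ν (fun s => e s (tgt a)) (fun s => e s (src a)) (hc (tgt a)) (hc (src a))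
    (P a), Pi.zero_apply]
  refine Finset.sum_eq_zero fun t ht => Finset.sum_eq_zero fun s hs => ?_
  exact h a s t (by have := Finset.mem_range.mp hs; omega)

include hc hi in
theorem FB_mul {r q : ℕ} {ξ η} (hξ : FB e r ξ) (hη : FB e q η) : FB e (r + q) (ξ * η) := by
  intro i s t hst
  have hexp : e t i * (ξ * η) i * e s i
      = ∑ m ∈ Finset.range ν, ((e t i * ξ i) * e m i) * (e m i * (η i * e s i)) := by
    have h1 : e t i * (ξ * η) i * e s i = (e t i * ξ i) * (η i * e s i) := by
      show e t i * (ξ i * η i) * e s i = _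
      simp only [Matrix.mul_assoc]
    rw [h1, mid_expand ν (fun m => e m i) (hc i) (fun m => hi m i)]
  rw [hexp]
  refine Finset.sum_eq_zero fun m _ => ?_
  rcases Nat.lt_or_ge m (t + r) with h | h
  · rw [hξ i m t h, Matrix.zero_mul]
  · have h0 : e m i * (η i * e s i) = 0 := by
      rw [← Matrix.mul_assoc]; exact hη i s m (by omega)
    rw [h0, Matrix.mul_zero]

include hc hi in
theorem FR_lm {r q : ℕ} {ξ} {P : CRep src tgt k d} (hξ : FB e r ξ) (hP : FR e q P) :
    FR e (r + q) (lm ξ P) := by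
  intro a s t hst
  have hexp : e t (tgt a) * lm ξ P a * e s (src a)
      = ∑ m ∈ Finset.range ν,
          ((e t (tgt a) * ξ (tgt a)) * e m (tgt a)) * (e m (tgt a) * (P a * e s (src a))) := by
    have h1 : e t (tgt a) * lm ξ P a * e s (src a)
        = (e t (tgt a) * ξ (tgt a)) * (P a * e s (src a)) := by
      show e t (tgt a) * (ξ (tgt a) * P a) * e s (src a) = _
      simp only [Matrix.mul_assoc]
    rw [h1, mid_expand ν (fun m => e m (tgt a)) (hc (tgt a)) (fun m => hi m (tgt a))]
  rw [hexp]
  refine Finset.sum_eq_zero fun m _ => ?_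
  rcases Nat.lt_or_ge m (t + r) with h | h
  · rw [hξ (tgt a) m t h, Matrix.zero_mul]
  · have h0 : e m (tgt a) * (P a * e s (src a)) = 0 := by
      rw [← Matrix.mul_assoc]; exact hP a s m (by omega)
    rw [h0, Matrix.mul_zero]

include hc hi in
theorem FR_rm {r q : ℕ} {ξ} {P : CRep src tgt k d} (hP : FR e q P) (hξ : FB e r ξ) :
    FR e (q + r) (rm P ξ) := by
  intro a s t hst
  have hexp : e t (tgt a) * rm P ξ a * e s (src a)
      = ∑ m ∈ Finset.range ν,
          ((e t (tgt a) * P a) * e m (src a)) * (e m (src a) * (ξ (src a) * e s (src a))) := by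
    have h1 : e t (tgt a) * rm P ξ a * e s (src a)
        = (e t (tgt a) * P a) * (ξ (src a) * e s (src a)) := by
      show e t (tgt a) * (P a * ξ (src a)) * e s (src a) = _
      simp only [Matrix.mul_assoc]
    rw [h1, mid_expand ν (fun m => e m (src a)) (hc (src a)) (fun m => hi m (src a))]
  rw [hexp]
  refine Finset.sum_eq_zero fun m _ => ?_
  rcases Nat.lt_or_ge m (t + q) with h | h
  · rw [hP a m t h, Matrix.zero_mul]
  · have h0 : e m (src a) * (ξ (src a) * e s (src a)) = 0 := by
      rw [← Matrix.mul_assoc]; exact hξ (src a) s m (by omega)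
    rw [h0, Matrix.mul_zero]

include hi ho in
theorem pR_block {r : ℕ} (P : CRep src tgt k d) (a : A) (s t : ℕ) :
    e t (tgt a) * pR e ν r P a * e s (src a)
      = if t < ν ∧ s = t + r then e t (tgt a) * P a * e s (src a) else 0 := by
  show e t (tgt a) * (∑ t' ∈ Finset.range ν, e t' (tgt a) * P a * e (t' + r) (src a))
      * e s (src a) = _
  rw [Matrix.mul_sum, Matrix.sum_mul]
  by_cases hcase : t < ν ∧ s = t + r
  · rw [if_pos hcase]
    obtain ⟨h1, h2⟩ := hcase
    subst h2
    rw [Finset.sum_eq_single t]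
    · have : e t (tgt a) * (e t (tgt a) * P a * e (t + r) (src a)) * e (t + r) (src a)
          = (e t (tgt a) * e t (tgt a)) * (P a * (e (t + r) (src a) * e (t + r) (src a))) := by
        simp only [Matrix.mul_assoc]
      rw [this, hi, hi, ← Matrix.mul_assoc]
    · intro t' _ hne
      simp only [← Matrix.mul_assoc]
      rw [ho t t' (tgt a) (Ne.symm hne)]
      simp only [Matrix.zero_mul]
    · intro h; exact absurd (Finset.mem_range.mpr h1) h
  · rw [if_neg hcase]
    refine Finset.sum_eq_zero fun t' ht' => ?_
    by_cases he : t' = t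
    · subst he
      have hs : s ≠ t' + r := fun h => hcase ⟨Finset.mem_range.mp ht', h⟩
      simp only [Matrix.mul_assoc]
      rw [ho (t' + r) s (src a) (Ne.symm hs)]
      simp only [Matrix.mul_zero]
    · simp only [← Matrix.mul_assoc]
      rw [ho t t' (tgt a) (Ne.symm he)]
      simp only [Matrix.zero_mul]

include hi ho in
theorem pB_block {r : ℕ} (ξ : ∀ i : I, Matrix (Fin (d i)) (Fin (d i)) k) (i : I) (s t : ℕ) :
    e t i * pB e ν r ξ i * e s i
      = if t < ν ∧ s = t + r then e t i * ξ i * e s i else 0 := by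
  show e t i * (∑ t' ∈ Finset.range ν, e t' i * ξ i * e (t' + r) i) * e s i = _
  rw [Matrix.mul_sum, Matrix.sum_mul]
  by_cases hcase : t < ν ∧ s = t + r
  · rw [if_pos hcase]
    obtain ⟨h1, h2⟩ := hcase
    subst h2
    rw [Finset.sum_eq_single t]
    · have : e t i * (e t i * ξ i * e (t + r) i) * e (t + r) i
          = (e t i * e t i) * (ξ i * (e (t + r) i * e (t + r) i)) := by
        simp only [Matrix.mul_assoc]
      rw [this, hi, hi, ← Matrix.mul_assoc]
    · intro t' _ hne
      simp only [← Matrix.mul_assoc]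
      rw [ho t t' i (Ne.symm hne)]
      simp only [Matrix.zero_mul]
    · intro h; exact absurd (Finset.mem_range.mpr h1) h
  · rw [if_neg hcase]
    refine Finset.sum_eq_zero fun t' ht' => ?_
    by_cases he : t' = t
    · subst he
      have hs : s ≠ t' + r := fun h => hcase ⟨Finset.mem_range.mp ht', h⟩
      simp only [Matrix.mul_assoc]
      rw [ho (t' + r) s i (Ne.symm hs)]
      simp only [Matrix.mul_zero]
    · simp only [← Matrix.mul_assoc]
      rw [ho t t' i (Ne.symm he)]
      simp only [Matrix.zero_mul]

include hi ho in
theorem pR_FR {r : ℕ} (P : CRep src tgt k d) : FR e r (pR e ν r P) := by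
  intro a s t hst
  rw [pR_block e ν hi ho P a s t, if_neg]
  rintro ⟨-, h2⟩; omega

include hi ho in
theorem pB_FB {r : ℕ} (ξ : ∀ i : I, Matrix (Fin (d i)) (Fin (d i)) k) :
    FB e r (pB e ν r ξ) := by
  intro i s t hst
  rw [pB_block e ν hi ho ξ i s t, if_neg]
  rintro ⟨-, h2⟩; omega

include hi ho in
theorem pR_idem {r : ℕ} (P : CRep src tgt k d) : pR e ν r (pR e ν r P) = pR e ν r P := by
  funext a
  refine Finset.sum_congr rfl fun t ht => ?_
  rw [pR_block e ν hi ho P a (t + r) t, if_pos ⟨Finset.mem_range.mp ht, rfl⟩]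

include hc hi ho in
theorem pR_remainder {r : ℕ} {P : CRep src tgt k d} (hP : FR e r P) :
    FR e (r + 1) (P - pR e ν r P) := by
  intro a s t hst
  have hsub : e t (tgt a) * (P - pR e ν r P) a * e s (src a)
      = e t (tgt a) * P a * e s (src a) - e t (tgt a) * pR e ν r P a * e s (src a) := by
    show e t (tgt a) * (P a - pR e ν r P a) * e s (src a) = _
    rw [Matrix.mul_sub, Matrix.sub_mul]
  rw [hsub, pR_block e ν hi ho P a s t]
  by_cases hcase : t < ν ∧ s = t + r
  · rw [if_pos hcase, sub_self]
  · rw [if_neg hcase, sub_zero]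
    rcases Nat.lt_or_ge s (t + r) with h | h
    · exact hP a s t h
    · have hs : s = t + r := by omega
      have htν : ¬ t < ν := fun h' => hcase ⟨h', hs⟩
      rw [e_zero e ν hc ho (by omega) (tgt a), Matrix.zero_mul, Matrix.zero_mul]

include hc hi ho in
theorem pB_remainder {r : ℕ} {ξ} (hξ : FB e r ξ) :
    FB e (r + 1) (ξ - pB e ν r ξ) := by
  intro i s t hst
  have hsub : e t i * (ξ - pB e ν r ξ) i * e s i
      = e t i * ξ i * e s i - e t i * pB e ν r ξ i * e s i := by
    show e t i * (ξ i - pB e ν r ξ i) * e s i = _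
    rw [Matrix.mul_sub, Matrix.sub_mul]
  rw [hsub, pB_block e ν hi ho ξ i s t]
  by_cases hcase : t < ν ∧ s = t + r
  · rw [if_pos hcase, sub_self]
  · rw [if_neg hcase, sub_zero]
    rcases Nat.lt_or_ge s (t + r) with h | h
    · exact hξ i s t h
    · have hs : s = t + r := by omega
      have htν : ¬ t < ν := fun h' => hcase ⟨h', hs⟩
      rw [e_zero e ν hc ho (by omega) i, Matrix.zero_mul, Matrix.zero_mul]

theorem pR_add {r : ℕ} (P Q : CRep src tgt k d) :
    pR e ν r (P + Q) = pR e ν r P + pR e ν r Q := by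
  funext a
  show ∑ t ∈ Finset.range ν, e t (tgt a) * (P a + Q a) * e (t + r) (src a) = _
  simp only [Matrix.mul_add, Matrix.add_mul, Finset.sum_add_distrib]
  rfl

theorem pR_neg {r : ℕ} (P : CRep src tgt k d) : pR e ν r (-P) = -(pR e ν r P) := by
  funext a
  show ∑ t ∈ Finset.range ν, e t (tgt a) * (-(P a)) * e (t + r) (src a) = _
  simp only [Matrix.mul_neg, Matrix.neg_mul, Finset.sum_neg_distrib]
  rfl

theorem pR_sub {r : ℕ} (P Q : CRep src tgt k d) :
    pR e ν r (P - Q) = pR e ν r P - pR e ν r Q := by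
  rw [sub_eq_add_neg, pR_add, pR_neg, sub_eq_add_neg]

theorem pR_zero_of_FR {r : ℕ} {P : CRep src tgt k d} (hP : FR e (r + 1) P) :
    pR e ν r P = 0 := by
  funext a
  show ∑ t ∈ Finset.range ν, e t (tgt a) * P a * e (t + r) (src a) = 0
  exact Finset.sum_eq_zero fun t _ => hP a (t + r) t (by omega)

end Basic

end SliceAux

end SliceAux

section SliceAux2

namespace SliceAux

set_option linter.unusedSectionVars false

variable {k : Type} [Field k] {I A : Type} {src tgt : A → I} {d : I → ℕ}
variable (e : ℕ → ∀ i : I, Matrix (Fin (d i)) (Fin (d i)) k) (ν : ℕ)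
variable (N : CRep src tgt k d)
variable (hc : ∀ i, ∑ s ∈ Finset.range ν, e s i = 1)
variable (hi : ∀ s i, e s i * e s i = e s i)
variable (ho : ∀ s t i, s ≠ t → e s i * e t i = 0)
variable (hN : ∀ (a : A) (s t : ℕ), s ≠ t → e t (tgt a) * N a * e s (src a) = 0)

include hc ho hN in
theorem eN (a : A) (s : ℕ) : e s (tgt a) * N a = N a * e s (src a) := by
  by_cases hs : s < ν
  · have h1 : e s (tgt a) * N a = e s (tgt a) * N a * (∑ t ∈ Finset.range ν, e t (src a)) := by
      rw [hc, Matrix.mul_one]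
    have h2 : N a * e s (src a) = (∑ t ∈ Finset.range ν, e t (tgt a)) * (N a * e s (src a)) := by
      rw [hc, Matrix.one_mul]
    rw [h1, Matrix.mul_sum, h2, Matrix.sum_mul]
    rw [Finset.sum_eq_single s (fun t _ hne => hN a t s hne)
      (fun h => absurd (Finset.mem_range.mpr hs) h),
      Finset.sum_eq_single s (fun t _ hne => by
        rw [← Matrix.mul_assoc]; exact hN a s t (Ne.symm hne))
      (fun h => absurd (Finset.mem_range.mpr hs) h)]
    rw [Matrix.mul_assoc]
  · rw [e_zero e ν hc ho (by omega), e_zero e ν hc ho (by omega), Matrix.zero_mul,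
      Matrix.mul_zero]

include hN in
theorem FR_N : FR (src := src) (tgt := tgt) e 0 N := fun a s t hst => hN a s t (by omega)

include hc hi hN in
theorem FR_phi {r : ℕ} {ξ} (hξ : FB e r ξ) : FR e r (phi N ξ) := by
  have h1 : FR e (r + 0) (lm ξ N) := FR_lm e ν hc hi hξ (FR_N e N hN)
  have h2 : FR e (0 + r) (rm N ξ) := FR_rm e ν hc hi (FR_N e N hN) hξ
  have h3 : phi N ξ = lm ξ N - rm N ξ := rfl
  rw [h3]
  exact FR_sub e (by simpa using h1) (by simpa using h2)

theorem phi_neg (ξ : ∀ i : I, Matrix (Fin (d i)) (Fin (d i)) k) :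
    phi (src := src) (tgt := tgt) N (-ξ) = -(phi N ξ) := by
  funext a
  show (-ξ) (tgt a) * N a - N a * (-ξ) (src a) = -(ξ (tgt a) * N a - N a * ξ (src a))
  simp only [Pi.neg_apply, Matrix.neg_mul, Matrix.mul_neg]
  abel

theorem phi_zero : phi (src := src) (tgt := tgt) N 0 = 0 := by
  funext a
  show (0 : ∀ i : I, Matrix (Fin (d i)) (Fin (d i)) k) (tgt a) * N a
      - N a * (0 : ∀ i : I, Matrix (Fin (d i)) (Fin (d i)) k) (src a) = 0
  simp

include hc ho hN in
theorem pR_N_zero {r : ℕ} (hr : 1 ≤ r) : pR e ν r N = 0 := by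
  funext a
  show ∑ t ∈ Finset.range ν, e t (tgt a) * N a * e (t + r) (src a) = 0
  exact Finset.sum_eq_zero fun t _ => hN a (t + r) t (by omega)

include hc hi ho hN in
theorem pR_phi {r : ℕ} (ξ : ∀ i : I, Matrix (Fin (d i)) (Fin (d i)) k) :
    pR e ν r (phi N ξ) = phi N (pB e ν r ξ) := by
  funext a
  show ∑ t ∈ Finset.range ν, e t (tgt a) * phi N ξ a * e (t + r) (src a)
      = pB e ν r ξ (tgt a) * N a - N a * pB e ν r ξ (src a)
  have hterm : ∀ t, e t (tgt a) * phi N ξ a * e (t + r) (src a)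
      = (e t (tgt a) * ξ (tgt a) * e (t + r) (tgt a)) * N a
        - N a * (e t (src a) * ξ (src a) * e (t + r) (src a)) := by
    intro t
    have hϕ : e t (tgt a) * phi N ξ a * e (t + r) (src a)
        = e t (tgt a) * (ξ (tgt a) * N a) * e (t + r) (src a)
          - e t (tgt a) * (N a * ξ (src a)) * e (t + r) (src a) := by
      show e t (tgt a) * (ξ (tgt a) * N a - N a * ξ (src a)) * e (t + r) (src a) = _
      rw [Matrix.mul_sub, Matrix.sub_mul]
    rw [hϕ]
    congr 1
    · calc e t (tgt a) * (ξ (tgt a) * N a) * e (t + r) (src a)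
          = e t (tgt a) * (ξ (tgt a) * (N a * e (t + r) (src a))) := by
            simp only [Matrix.mul_assoc]
        _ = e t (tgt a) * (ξ (tgt a) * (e (t + r) (tgt a) * N a)) := by
            rw [← eN e ν N hc ho hN a (t + r)]
        _ = (e t (tgt a) * ξ (tgt a) * e (t + r) (tgt a)) * N a := by
            simp only [Matrix.mul_assoc]
    · calc e t (tgt a) * (N a * ξ (src a)) * e (t + r) (src a)
          = (e t (tgt a) * N a) * (ξ (src a) * e (t + r) (src a)) := by
            simp only [Matrix.mul_assoc]
        _ = (N a * e t (src a)) * (ξ (src a) * e (t + r) (src a)) := by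
            rw [eN e ν N hc ho hN a t]
        _ = N a * (e t (src a) * ξ (src a) * e (t + r) (src a)) := by
            simp only [Matrix.mul_assoc]
  rw [Finset.sum_congr rfl fun t _ => hterm t, Finset.sum_sub_distrib]
  show _ = (∑ t ∈ Finset.range ν, e t (tgt a) * ξ (tgt a) * e (t + r) (tgt a)) * N a
      - N a * (∑ t ∈ Finset.range ν, e t (src a) * ξ (src a) * e (t + r) (src a))
  rw [Matrix.sum_mul, Matrix.mul_sum]

include hc hi ho hN in
theorem phi_inj
    (hdir : ∀ s t : ℕ, s < t →
      ∀ f : ∀ i : I, Matrix (Fin (d i)) (Fin (d i)) k,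
        (∀ i, e s i * f i * e t i = f i) →
        (∀ a : A, f (tgt a) * N a = N a * f (src a)) → f = 0)
    {ξ} (hξ : FB e 1 ξ) (hphi : phi N ξ = 0) : ξ = 0 := by
  have hcom : ∀ a, ξ (tgt a) * N a = N a * ξ (src a) := by
    intro a
    have h0 : ξ (tgt a) * N a - N a * ξ (src a) = 0 := congrFun hphi a
    exact sub_eq_zero.mp h0
  funext i
  rw [sandwich_sum ν (fun s => e s i) (fun s => e s i) (hc i) (hc i) (ξ i), Pi.zero_apply]
  refine Finset.sum_eq_zero fun t ht => Finset.sum_eq_zero fun s hs => ?_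
  rcases Nat.lt_or_ge s (t + 1) with h | h
  · exact hξ i s t h
  · have hts : t < s := by omega
    have hblock : ∀ j, e t j * (e t j * ξ j * e s j) * e s j = e t j * ξ j * e s j := by
      intro j
      calc e t j * (e t j * ξ j * e s j) * e s j
          = (e t j * e t j) * (ξ j * (e s j * e s j)) := by simp only [Matrix.mul_assoc]
        _ = e t j * (ξ j * e s j) := by rw [hi, hi]
        _ = e t j * ξ j * e s j := by rw [Matrix.mul_assoc]
    have hcomf : ∀ a, (fun j => e t j * ξ j * e s j) (tgt a) * N a
        = N a * (fun j => e t j * ξ j * e s j) (src a) := by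
      intro a
      show (e t (tgt a) * ξ (tgt a) * e s (tgt a)) * N a
          = N a * (e t (src a) * ξ (src a) * e s (src a))
      calc (e t (tgt a) * ξ (tgt a) * e s (tgt a)) * N a
          = e t (tgt a) * (ξ (tgt a) * (e s (tgt a) * N a)) := by simp only [Matrix.mul_assoc]
        _ = e t (tgt a) * (ξ (tgt a) * (N a * e s (src a))) := by
            rw [eN e ν N hc ho hN a s]
        _ = (e t (tgt a) * (ξ (tgt a) * N a)) * e s (src a) := by simp only [Matrix.mul_assoc]
        _ = (e t (tgt a) * (N a * ξ (src a))) * e s (src a) := by rw [hcom a]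
        _ = (e t (tgt a) * N a) * (ξ (src a) * e s (src a)) := by simp only [Matrix.mul_assoc]
        _ = (N a * e t (src a)) * (ξ (src a) * e s (src a)) := by
            rw [eN e ν N hc ho hN a t]
        _ = N a * (e t (src a) * ξ (src a) * e s (src a)) := by simp only [Matrix.mul_assoc]
    have hzero := hdir t s hts (fun j => e t j * ξ j * e s j) hblock hcomf
    exact congrFun hzero i

include hc hi ho in
theorem FB_pow_deg {η} (hη : FB e 1 η) : ∀ j, FB e j (η ^ j) := by
  intro j
  induction j with
  | zero =>
    intro i s t hst
    rw [pow_zero]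
    show e t i * (1 : ∀ i : I, Matrix (Fin (d i)) (Fin (d i)) k) i * e s i = 0
    rw [Pi.one_apply, Matrix.mul_one]
    exact ho t s i (by omega)
  | succ j ih =>
    rw [pow_succ]
    exact FB_mul e ν hc hi ih hη

include hc hi ho in
theorem FB_pow_ge {r : ℕ} {η} (hη : FB e r η) : ∀ j, 1 ≤ j → FB e r (η ^ j) := by
  intro j
  induction j with
  | zero => omega
  | succ j ih =>
    intro _
    rcases Nat.eq_zero_or_pos j with h0 | hpos
    · subst h0; rw [pow_one]; exact hη
    · rw [pow_succ]
      exact FB_mono e (by omega) (FB_mul e ν hc hi (ih hpos) hη)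

include hc hi ho in
theorem pow_nu_zero {η} (hη : FB e 1 η) : η ^ ν = 0 :=
  eq_zero_of_FB e ν hc (FB_pow_deg e ν hc hi ho hη ν)

include hc hi ho in
theorem unit_geom {η} (hη : FB e 1 η) :
    ((1 + η) * geom ν η = 1) ∧ (geom ν η * (1 + η) = 1) := by
  have hx : (-η) ^ ν = 0 := pow_nu_zero e ν hc hi ho (FB_neg e hη)
  have h1 : (1 : ∀ i : I, Matrix (Fin (d i)) (Fin (d i)) k) - -η = 1 + η := by
    rw [sub_neg_eq_add]
  constructor
  · have h2 := mul_neg_geom_sum (-η) ν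
    rw [hx, sub_zero, h1] at h2
    exact h2
  · have h2 := geom_sum_mul_neg (-η) ν
    rw [hx, sub_zero, h1] at h2
    exact h2

/-- The unipotent element `1 + η`. -/
def mkU {η} (hη : FB e 1 η) : Gd k d := fun i =>
  { val := 1 + η i
    inv := geom ν η i
    val_inv := by
      have h := congrFun (unit_geom e ν hc hi ho hη).1 i
      simpa using h
    inv_val := by
      have h := congrFun (unit_geom e ν hc hi ho hη).2 i
      simpa using h }

theorem mkU_val {η} (hη : FB e 1 η) (i : I) :
    (↑(mkU e ν hc hi ho hη i) : Matrix (Fin (d i)) (Fin (d i)) k) = 1 + η i := rfl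

theorem mkU_inv_val {η} (hη : FB e 1 η) (i : I) :
    (↑((mkU e ν hc hi ho hη i)⁻¹) : Matrix (Fin (d i)) (Fin (d i)) k) = geom ν η i := rfl

include hc hi ho in
theorem geom_sub_one {r : ℕ} (hr : 1 ≤ r) {η} (hη : FB e r η) :
    FB e r (geom ν η - 1) := by
  rcases Nat.eq_zero_or_pos ν with h0 | hpos
  · subst h0
    intro i s t hst
    rw [e_zero e 0 hc ho (by omega), Matrix.zero_mul, Matrix.zero_mul]
  · have hsplit : geom ν η - 1 = ∑ j ∈ Finset.Ico 1 ν, (-η) ^ j := by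
      show (∑ j ∈ Finset.range ν, (-η) ^ j) - 1 = _
      rw [Finset.range_eq_Ico, Finset.sum_eq_sum_Ico_succ_bot hpos, pow_zero]
      abel
    rw [hsplit]
    apply FB_sum
    intro j hj
    exact FB_pow_ge e ν hc hi ho (FB_neg e hη) j (Finset.mem_Ico.mp hj).1

include hc hi ho in
theorem unit_coe_inv {u : Gd k d} {η} (hη : FB e 1 η)
    (hval : ∀ i, (↑(u i) : Matrix (Fin (d i)) (Fin (d i)) k) = 1 + η i) :
    ∀ i, (↑((u i)⁻¹) : Matrix (Fin (d i)) (Fin (d i)) k) = geom ν η i := by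
  intro i
  have h1 : u i = mkU e ν hc hi ho hη i := Units.ext (by rw [hval i]; rfl)
  rw [h1, mkU_inv_val]

include hc hi ho in
theorem U_inv {u : Gd k d}
    (hu : FB e 1 (fun i => (↑(u i) : Matrix (Fin (d i)) (Fin (d i)) k) - 1)) :
    FB e 1 (fun i => (↑((u i)⁻¹) : Matrix (Fin (d i)) (Fin (d i)) k) - 1) := by
  have hval : ∀ i, (↑(u i) : Matrix (Fin (d i)) (Fin (d i)) k)
      = 1 + ((↑(u i) : Matrix (Fin (d i)) (Fin (d i)) k) - 1) := fun i => by abel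
  have hinv := unit_coe_inv e ν hc hi ho hu hval
  have hg := geom_sub_one e ν hc hi ho le_rfl hu
  intro i s t hst
  show e t i * ((↑((u i)⁻¹) : Matrix (Fin (d i)) (Fin (d i)) k) - 1) * e s i = 0
  rw [show (↑((u i)⁻¹) : Matrix (Fin (d i)) (Fin (d i)) k) - 1
      = geom ν (fun j => (↑(u j) : Matrix (Fin (d j)) (Fin (d j)) k) - 1) i - 1 from by
    rw [hinv i]]
  exact hg i s t hst

include hc hi ho in
theorem U_mul {u v : Gd k d}
    (hu : FB e 1 (fun i => (↑(u i) : Matrix (Fin (d i)) (Fin (d i)) k) - 1))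
    (hv : FB e 1 (fun i => (↑(v i) : Matrix (Fin (d i)) (Fin (d i)) k) - 1)) :
    FB e 1 (fun i => (↑((u * v) i) : Matrix (Fin (d i)) (Fin (d i)) k) - 1) := by
  have hexp : (fun i => (↑((u * v) i) : Matrix (Fin (d i)) (Fin (d i)) k) - 1)
      = ((fun i => (↑(u i) : Matrix (Fin (d i)) (Fin (d i)) k) - 1)
          * (fun i => (↑(v i) : Matrix (Fin (d i)) (Fin (d i)) k) - 1))
        + ((fun i => (↑(u i) : Matrix (Fin (d i)) (Fin (d i)) k) - 1)
          + (fun i => (↑(v i) : Matrix (Fin (d i)) (Fin (d i)) k) - 1)) := by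
    funext i
    show (↑(u i * v i) : Matrix (Fin (d i)) (Fin (d i)) k) - 1 = _
    rw [Units.val_mul]
    show _ = ((↑(u i) : Matrix (Fin (d i)) (Fin (d i)) k) - 1)
        * ((↑(v i) : Matrix (Fin (d i)) (Fin (d i)) k) - 1)
      + (((↑(u i) : Matrix (Fin (d i)) (Fin (d i)) k) - 1)
        + ((↑(v i) : Matrix (Fin (d i)) (Fin (d i)) k) - 1))
    noncomm_ring
  rw [hexp]
  exact FB_add e (FB_mono e (by omega) (FB_mul e ν hc hi hu hv)) (FB_add e hu hv)

theorem gact_one (P : CRep src tgt k d) : gact src tgt (1 : Gd k d) P = P := by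
  funext a
  simp only [gact, Pi.one_apply, inv_one, Units.val_one, Matrix.one_mul, Matrix.mul_one]

theorem gact_mul (u v : Gd k d) (P : CRep src tgt k d) :
    gact src tgt (u * v) P = gact src tgt u (gact src tgt v P) := by
  funext a
  simp only [gact, Pi.mul_apply, mul_inv_rev, Units.val_mul, Matrix.mul_assoc]

end SliceAux

end SliceAux2

section SliceAux3

namespace SliceAux

set_option linter.unusedSectionVars false

variable {k : Type} [Field k] {I A : Type} {src tgt : A → I} {d : I → ℕ}
variable (e : ℕ → ∀ i : I, Matrix (Fin (d i)) (Fin (d i)) k) (ν : ℕ)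
variable (N : CRep src tgt k d)
variable (hc : ∀ i, ∑ s ∈ Finset.range ν, e s i = 1)
variable (hi : ∀ s i, e s i * e s i = e s i)
variable (ho : ∀ s t i, s ≠ t → e s i * e t i = 0)
variable (hN : ∀ (a : A) (s t : ℕ), s ≠ t → e t (tgt a) * N a * e s (src a) = 0)
variable (E : Set (CRep src tgt k d))

theorem E_comb (hE2 : ∀ P ∈ E, ∀ P' ∈ E, ∀ c : k, (N + c • (P - N) + (P' - N)) ∈ E)
    {X Y : CRep src tgt k d} (hX : (N + X) ∈ E) (hY : (N + Y) ∈ E) :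
    (N + (Y - X)) ∈ E := by
  have h := hE2 (N + X) hX (N + Y) hY (-1)
  have he : N + (-1 : k) • ((N + X) - N) + ((N + Y) - N) = N + (Y - X) := by
    simp only [neg_one_smul, add_sub_cancel_left]
    abel
  rwa [he] at h

theorem E_add2 (hE2 : ∀ P ∈ E, ∀ P' ∈ E, ∀ c : k, (N + c • (P - N) + (P' - N)) ∈ E)
    {X Y : CRep src tgt k d} (hX : (N + X) ∈ E) (hY : (N + Y) ∈ E) :
    (N + (X + Y)) ∈ E := by
  have h := hE2 (N + X) hX (N + Y) hY 1
  have he : N + (1 : k) • ((N + X) - N) + ((N + Y) - N) = N + (X + Y) := by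
    simp only [one_smul, add_sub_cancel_left]
    abel
  rwa [he] at h

theorem E_proj (hE1 : N ∈ E)
    (hE2 : ∀ P ∈ E, ∀ P' ∈ E, ∀ c : k, (N + c • (P - N) + (P' - N)) ∈ E)
    (hEg : ∀ P ∈ E, ∀ s t : ℕ,
      (fun a => N a + e t (tgt a) * (P a - N a) * e s (src a)) ∈ E)
    {Q : CRep src tgt k d} (hQ : Q ∈ E) (r : ℕ) :
    (N + pR e ν r (Q - N)) ∈ E := by
  classical
  have key : ∀ F : Finset ℕ,
      (N + ∑ t ∈ F,
        (fun a => e t (tgt a) * (Q a - N a) * e (t + r) (src a) : CRep src tgt k d)) ∈ E := by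
    intro F
    induction F using Finset.induction_on with
    | empty => simpa using hE1
    | @insert x F hx ih =>
      rw [Finset.sum_insert hx]
      have h2 : (N + (fun a => e x (tgt a) * (Q a - N a) * e (x + r) (src a) :
          CRep src tgt k d)) ∈ E := hEg Q hQ (x + r) x
      exact E_add2 N E hE2 h2 ih
  have hfin : pR e ν r (Q - N) = ∑ t ∈ Finset.range ν,
      (fun a => e t (tgt a) * (Q a - N a) * e (t + r) (src a) : CRep src tgt k d) := by
    funext a
    rw [Finset.sum_apply]
    rfl
  rw [hfin]
  exact key _

theorem gact_expand {u : Gd k d} {η ζ : ∀ i : I, Matrix (Fin (d i)) (Fin (d i)) k}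
    (hu : ∀ i, (↑(u i) : Matrix (Fin (d i)) (Fin (d i)) k) = 1 + η i)
    (hv : ∀ i, (↑((u i)⁻¹) : Matrix (Fin (d i)) (Fin (d i)) k) = 1 + ζ i)
    (P : CRep src tgt k d) :
    gact src tgt u P = P + lm η P + rm P ζ + rm (lm η P) ζ := by
  funext a
  simp only [gact, Pi.add_apply, lm, rm]
  rw [hu (tgt a), hv (src a)]
  simp only [Matrix.add_mul, Matrix.mul_add, Matrix.one_mul, Matrix.mul_one]
  abel

include hc hi hN in
theorem FR_lm_full {r : ℕ} {η} {P : CRep src tgt k d}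
    (hη : FB e r η) (hP : FR e 1 (P - N)) : FR e r (lm η P) := by
  have hsplit : lm η P = lm η N + lm η (P - N) := by
    funext a
    show η (tgt a) * P a = η (tgt a) * N a + η (tgt a) * (P - N) a
    show η (tgt a) * P a = η (tgt a) * N a + η (tgt a) * (P a - N a)
    rw [Matrix.mul_sub]
    abel
  rw [hsplit]
  refine FR_add e ?_ ?_
  · have h := FR_lm e ν hc hi hη (FR_N e N hN)
    simpa using h
  · exact FR_mono e (by omega) (FR_lm e ν hc hi hη hP)

include hc hi hN in
theorem FR_rm_full {r : ℕ} {ζ} {P : CRep src tgt k d}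
    (hP : FR e 1 (P - N)) (hζ : FB e r ζ) : FR e r (rm P ζ) := by
  have hsplit : rm P ζ = rm N ζ + rm (P - N) ζ := by
    funext a
    show P a * ζ (src a) = N a * ζ (src a) + (P - N) a * ζ (src a)
    show P a * ζ (src a) = N a * ζ (src a) + (P a - N a) * ζ (src a)
    rw [Matrix.sub_mul]
    abel
  rw [hsplit]
  refine FR_add e ?_ ?_
  · have h := FR_rm e ν hc hi (FR_N e N hN) hζ
    simpa using h
  · exact FR_mono e (by omega) (FR_rm e ν hc hi hP hζ)

include hc hi ho hN in
theorem Y_stab {u : Gd k d}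
    (hu : FB e 1 (fun i => (↑(u i) : Matrix (Fin (d i)) (Fin (d i)) k) - 1))
    {P : CRep src tgt k d} (hP : FR e 1 (P - N)) :
    FR e 1 (gact src tgt u P - N) := by
  have hval : ∀ i, (↑(u i) : Matrix (Fin (d i)) (Fin (d i)) k)
      = 1 + ((↑(u i) : Matrix (Fin (d i)) (Fin (d i)) k) - 1) := fun i => by abel
  have hζ := U_inv e ν hc hi ho hu
  have hvinv : ∀ i, (↑((u i)⁻¹) : Matrix (Fin (d i)) (Fin (d i)) k)
      = 1 + ((↑((u i)⁻¹) : Matrix (Fin (d i)) (Fin (d i)) k) - 1) := fun i => by abel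
  have hexp := gact_expand (η := fun i => (↑(u i) : Matrix (Fin (d i)) (Fin (d i)) k) - 1)
    (ζ := fun i => (↑((u i)⁻¹) : Matrix (Fin (d i)) (Fin (d i)) k) - 1) hval hvinv P
  have h2 : gact src tgt u P - N
      = (((P - N) + lm (fun i => (↑(u i) : Matrix (Fin (d i)) (Fin (d i)) k) - 1) P)
          + rm P (fun i => (↑((u i)⁻¹) : Matrix (Fin (d i)) (Fin (d i)) k) - 1))
        + rm (lm (fun i => (↑(u i) : Matrix (Fin (d i)) (Fin (d i)) k) - 1) P)
            (fun i => (↑((u i)⁻¹) : Matrix (Fin (d i)) (Fin (d i)) k) - 1) := by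
    rw [hexp]; abel
  rw [h2]
  refine FR_add e (FR_add e (FR_add e hP ?_) ?_) ?_
  · exact FR_lm_full e ν N hc hi hN hu hP
  · exact FR_rm_full e ν N hc hi hN hP hζ
  · exact FR_mono e (by omega)
      (FR_rm e ν hc hi (FR_lm_full e ν N hc hi hN hu hP) hζ)

end SliceAux

end SliceAux3

section SliceAux4

namespace SliceAux

set_option linter.unusedSectionVars false
set_option maxHeartbeats 1000000

variable {k : Type} [Field k] {I A : Type} {src tgt : A → I} {d : I → ℕ}
variable (e : ℕ → ∀ i : I, Matrix (Fin (d i)) (Fin (d i)) k) (ν : ℕ)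
variable (N : CRep src tgt k d)
variable (hc : ∀ i, ∑ s ∈ Finset.range ν, e s i = 1)
variable (hi : ∀ s i, e s i * e s i = e s i)
variable (ho : ∀ s t i, s ≠ t → e s i * e t i = 0)
variable (hN : ∀ (a : A) (s t : ℕ), s ≠ t → e t (tgt a) * N a * e s (src a) = 0)
variable (E : Set (CRep src tgt k d))

include hc hi ho hN in
theorem ex_main
    (hE1 : N ∈ E)
    (hE2 : ∀ P ∈ E, ∀ P' ∈ E, ∀ c : k, (N + c • (P - N) + (P' - N)) ∈ E)
    (hEg : ∀ P ∈ E, ∀ s t : ℕ,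
      (fun a => N a + e t (tgt a) * (P a - N a) * e s (src a)) ∈ E)
    (hEspan : ∀ P : CRep src tgt k d,
      (∀ (a : A) (s t : ℕ), s ≤ t → e t (tgt a) * (P a - N a) * e s (src a) = 0) →
      ∃ Q ∈ E, ∃ ξ : ∀ i : I, Matrix (Fin (d i)) (Fin (d i)) k,
        (∀ (i : I) (s t : ℕ), s ≤ t → e t i * ξ i * e s i = 0) ∧
        P = Q + fun a => ξ (tgt a) * N a - N a * ξ (src a))
    (m : ℕ) :
    ∀ r, 1 ≤ r → ν ≤ r + m → ∀ P Q : CRep src tgt k d, FR e 1 (P - N) → Q ∈ E →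
      FR e r (P - Q) →
      ∃ u : Gd k d,
        FB e 1 (fun i => (↑(u i) : Matrix (Fin (d i)) (Fin (d i)) k) - 1)
        ∧ gact src tgt u P ∈ E := by
  induction m with
  | zero =>
    intro r hr hν P Q hP hQ hPQ
    have h0 : P - Q = 0 := eq_zero_of_FR e ν hc (FR_mono e hν hPQ)
    have hPQ' : P = Q := sub_eq_zero.mp h0
    refine ⟨1, ?_, ?_⟩
    · intro i s t hst
      show e t i * ((↑((1 : Gd k d) i) : Matrix (Fin (d i)) (Fin (d i)) k) - 1) * e s i = 0
      rw [show (↑((1 : Gd k d) i) : Matrix (Fin (d i)) (Fin (d i)) k) = 1 from rfl]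
      simp
    · rw [gact_one, hPQ']; exact hQ
  | succ m ih =>
    intro r hr hν P Q hP hQ hPQ
    obtain ⟨x, hx1, hxpr, hrem⟩ : ∃ x : CRep src tgt k d,
        FR e 1 x ∧ pR e ν r x = x ∧ FR e (r + 1) ((P - Q) - x) :=
      ⟨pR e ν r (P - Q), FR_mono e hr (pR_FR e ν hi ho _), pR_idem e ν hi ho _,
        pR_remainder e ν hc hi ho hPQ⟩
    obtain ⟨Q₁, hQ₁, ξ, hξstrict, hPeq⟩ := hEspan (N + x) (by
      intro a s t hst
      have hb : (N + x) a - N a = x a := by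
        show N a + x a - N a = x a
        abel
      rw [hb]
      exact hx1 a s t (by omega))
    have hPeq' : N + x = Q₁ + phi N ξ := hPeq
    have hproj : x = pR e ν r (Q₁ - N) + phi N (pB e ν r ξ) := by
      have h5 : pR e ν r (N + x) = pR e ν r (Q₁ + phi N ξ) := by rw [hPeq']
      rw [pR_add, pR_add, pR_phi e ν N hc hi ho hN, pR_N_zero e ν N hc ho hN hr, hxpr] at h5
      have h6 : pR e ν r Q₁ = pR e ν r (Q₁ - N) := by
        conv_lhs => rw [show Q₁ = (Q₁ - N) + N from by abel]
        rw [pR_add, pR_N_zero e ν N hc ho hN hr, add_zero]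
      rw [h6] at h5
      simpa using h5
    have hηFB : FB e r (-(pB e ν r ξ)) := FB_neg e (pB_FB e ν hi ho ξ)
    have hη1 : FB e 1 (-(pB e ν r ξ)) := FB_mono e hr hηFB
    set u := mkU e ν hc hi ho hη1 with hudef
    have hu1 : ∀ i, (↑(u i) : Matrix (Fin (d i)) (Fin (d i)) k) = 1 + (-(pB e ν r ξ)) i :=
      fun i => by rw [hudef]; rfl
    have hζ : FB e r (geom ν (-(pB e ν r ξ)) - 1) := geom_sub_one e ν hc hi ho hr hηFB
    have hv1 : ∀ i, (↑((u i)⁻¹) : Matrix (Fin (d i)) (Fin (d i)) k)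
        = 1 + (geom ν (-(pB e ν r ξ)) - 1) i := by
      intro i
      rw [hudef, mkU_inv_val]
      show geom ν (-(pB e ν r ξ)) i = 1 + (geom ν (-(pB e ν r ξ)) i - 1)
      abel
    have hz : ∀ i, (-(pB e ν r ξ)) i + (geom ν (-(pB e ν r ξ)) - 1) i
        + (-(pB e ν r ξ)) i * (geom ν (-(pB e ν r ξ)) - 1) i = 0 := by
      intro i
      have hm := Units.mul_inv (u i)
      rw [hu1 i, hv1 i] at hm
      have h7 : (1 : Matrix (Fin (d i)) (Fin (d i)) k)
          + ((-(pB e ν r ξ)) i + (geom ν (-(pB e ν r ξ)) - 1) i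
            + (-(pB e ν r ξ)) i * (geom ν (-(pB e ν r ξ)) - 1) i) = 1 + 0 := by
        rw [add_zero]
        conv_rhs => rw [← hm]
        noncomm_ring
      exact add_left_cancel h7
    have hq_phi : pR e ν r (Q₁ - N) = x + phi N (-(pB e ν r ξ)) := by
      rw [phi_neg, hproj]
      abel
    have hufb : FB e 1 (fun i => (↑(u i) : Matrix (Fin (d i)) (Fin (d i)) k) - 1) := by
      intro i s t hst
      show e t i * ((↑(u i) : Matrix (Fin (d i)) (Fin (d i)) k) - 1) * e s i = 0
      rw [show (↑(u i) : Matrix (Fin (d i)) (Fin (d i)) k) - 1 = (-(pB e ν r ξ)) i from by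
        rw [hu1 i]; abel]
      exact hη1 i s t hst
    have hQ'E : (Q + pR e ν r (Q₁ - N)) ∈ E := by
      have hQN : (N + (Q - N)) ∈ E := by
        rw [show N + (Q - N) = Q from by abel]; exact hQ
      have h8 := E_add2 N E hE2 hQN (E_proj e ν N E hE1 hE2 hEg hQ₁ r)
      rw [show N + ((Q - N) + pR e ν r (Q₁ - N)) = Q + pR e ν r (Q₁ - N) from by abel] at h8
      exact h8
    have hexp : gact src tgt u P - (Q + pR e ν r (Q₁ - N))
        = ((P - Q) - x) + lm (-(pB e ν r ξ)) (P - N)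
          + rm N (-((-(pB e ν r ξ)) * (geom ν (-(pB e ν r ξ)) - 1)))
          + rm (P - N) (geom ν (-(pB e ν r ξ)) - 1)
          + rm (lm (-(pB e ν r ξ)) P) (geom ν (-(pB e ν r ξ)) - 1) := by
      rw [gact_expand hu1 hv1 P, hq_phi]
      funext a
      rw [← sub_eq_zero]
      conv_rhs => rw [show (0 : Matrix (Fin (d (tgt a))) (Fin (d (src a))) k)
          = N a * ((-(pB e ν r ξ)) (src a) + (geom ν (-(pB e ν r ξ)) - 1) (src a)
            + (-(pB e ν r ξ)) (src a) * (geom ν (-(pB e ν r ξ)) - 1) (src a)) from by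
        rw [hz (src a), Matrix.mul_zero]]
      simp only [phi, lm, rm, Pi.add_apply, Pi.sub_apply, Pi.neg_apply, Pi.mul_apply,
        Pi.one_apply, Matrix.mul_add, Matrix.add_mul, Matrix.mul_sub, Matrix.sub_mul,
        Matrix.one_mul, Matrix.mul_one, Matrix.neg_mul, Matrix.mul_neg, Matrix.mul_assoc]
      abel
    have hΔ : FR e (r + 1) (gact src tgt u P - (Q + pR e ν r (Q₁ - N))) := by
      rw [hexp]
      refine FR_add e (FR_add e (FR_add e (FR_add e ?_ ?_) ?_) ?_) ?_
      · exact hrem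
      · exact FR_lm e ν hc hi hηFB hP
      · exact FR_mono e (by omega)
          (FR_rm e ν hc hi (FR_N e N hN) (FB_neg e (FB_mul e ν hc hi hηFB hζ)))
      · exact FR_mono e (by omega) (FR_rm e ν hc hi hP hζ)
      · exact FR_mono e (by omega)
          (FR_rm e ν hc hi (FR_lm_full e ν N hc hi hN hηFB hP) hζ)
    obtain ⟨u', hu', hact⟩ := ih (r + 1) (by omega) (by omega) (gact src tgt u P)
      (Q + pR e ν r (Q₁ - N)) (Y_stab e ν N hc hi ho hN hufb hP) hQ'E hΔ
    refine ⟨u' * u, U_mul e ν hc hi ho hu' hufb, ?_⟩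
    rw [gact_mul]
    exact hact

include hc hi ho hN in
theorem uniq_main
    (hdir : ∀ s t : ℕ, s < t → ∀ f : ∀ i : I, Matrix (Fin (d i)) (Fin (d i)) k,
        (∀ i, e s i * f i * e t i = f i) →
        (∀ a : A, f (tgt a) * N a = N a * f (src a)) → f = 0)
    (hE1 : N ∈ E)
    (hE2 : ∀ P ∈ E, ∀ P' ∈ E, ∀ c : k, (N + c • (P - N) + (P' - N)) ∈ E)
    (hEg : ∀ P ∈ E, ∀ s t : ℕ,
      (fun a => N a + e t (tgt a) * (P a - N a) * e s (src a)) ∈ E)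
    (hEsub : ∀ P ∈ E, ∀ (a : A) (s t : ℕ), s ≤ t →
      e t (tgt a) * (P a - N a) * e s (src a) = 0)
    (hEu : ∀ Q ∈ E, ∀ Q' ∈ E,
      ∀ ξ ξ' : ∀ i : I, Matrix (Fin (d i)) (Fin (d i)) k,
        (∀ (i : I) (s t : ℕ), s ≤ t → e t i * ξ i * e s i = 0) →
        (∀ (i : I) (s t : ℕ), s ≤ t → e t i * ξ' i * e s i = 0) →
        (Q + fun a => ξ (tgt a) * N a - N a * ξ (src a))
          = (Q' + fun a => ξ' (tgt a) * N a - N a * ξ' (src a)) → Q = Q')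
    (m : ℕ) :
    ∀ r, 1 ≤ r → ν ≤ r + m → ∀ (u : Gd k d) (Q Q' : CRep src tgt k d), Q ∈ E → Q' ∈ E →
      FB e r (fun i => (↑(u i) : Matrix (Fin (d i)) (Fin (d i)) k) - 1) →
      gact src tgt u Q = Q' →
      (∀ i, (↑(u i) : Matrix (Fin (d i)) (Fin (d i)) k) = 1) ∧ Q = Q' := by
  induction m with
  | zero =>
    intro r hr hν u Q Q' hQ hQ' hufb hact
    have h0 : (fun i => (↑(u i) : Matrix (Fin (d i)) (Fin (d i)) k) - 1) = 0 :=
      eq_zero_of_FB e ν hc (FB_mono e hν hufb)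
    have hval : ∀ i, (↑(u i) : Matrix (Fin (d i)) (Fin (d i)) k) = 1 := by
      intro i
      have h1 := congrFun h0 i
      simp only [Pi.zero_apply] at h1
      exact sub_eq_zero.mp h1
    have huone : u = 1 := funext fun i => Units.ext (by rw [hval i]; rfl)
    refine ⟨hval, ?_⟩
    rw [huone, gact_one] at hact
    exact hact
  | succ m ih =>
    intro r hr hν u Q Q' hQ hQ' hufb hact
    have hval : ∀ i, (↑(u i) : Matrix (Fin (d i)) (Fin (d i)) k)
        = 1 + ((↑(u i) : Matrix (Fin (d i)) (Fin (d i)) k) - 1) := fun i => by abel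
    have key1 : ∀ a, (1 + ((↑(u (tgt a)) : Matrix (Fin (d (tgt a))) (Fin (d (tgt a))) k) - 1))
          * Q a
        = Q' a * (1 + ((↑(u (src a)) : Matrix (Fin (d (src a))) (Fin (d (src a))) k) - 1)) := by
      intro a
      have h0 : (↑(u (tgt a)) : Matrix (Fin (d (tgt a))) (Fin (d (tgt a))) k) * Q a
          * (↑((u (src a))⁻¹) : Matrix (Fin (d (src a))) (Fin (d (src a))) k) = Q' a :=
        congrFun hact a
      have h1 := congrArg
        (fun X => X * (↑(u (src a)) : Matrix (Fin (d (src a))) (Fin (d (src a))) k)) h0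
      rw [Matrix.mul_assoc, Units.inv_mul, Matrix.mul_one] at h1
      rw [← hval (tgt a), ← hval (src a)]
      exact h1
    have keyD : Q - Q'
        = -(phi N (fun i => (↑(u i) : Matrix (Fin (d i)) (Fin (d i)) k) - 1))
          + rm (Q' - N) (fun i => (↑(u i) : Matrix (Fin (d i)) (Fin (d i)) k) - 1)
          - lm (fun i => (↑(u i) : Matrix (Fin (d i)) (Fin (d i)) k) - 1) (Q - N) := by
      funext a
      rw [← sub_eq_zero]
      conv_rhs => rw [show (0 : Matrix (Fin (d (tgt a))) (Fin (d (src a))) k)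
          = (1 + ((↑(u (tgt a)) : Matrix (Fin (d (tgt a))) (Fin (d (tgt a))) k) - 1)) * Q a
            - Q' a * (1 + ((↑(u (src a)) : Matrix (Fin (d (src a))) (Fin (d (src a))) k) - 1))
          from by rw [key1 a, sub_self]]
      simp only [phi, rm, lm, Pi.add_apply, Pi.sub_apply, Pi.neg_apply,
        Matrix.mul_add, Matrix.add_mul, Matrix.mul_sub, Matrix.sub_mul,
        Matrix.one_mul, Matrix.mul_one, Matrix.neg_mul, Matrix.mul_neg]
      abel
    have hsubQ : FR e 1 (Q - N) := fun a s t hst => hEsub Q hQ a s t (by omega)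
    have hsubQ' : FR e 1 (Q' - N) := fun a s t hst => hEsub Q' hQ' a s t (by omega)
    have hproj : pR e ν r (Q - Q')
        = -(phi N (pB e ν r (fun i => (↑(u i) : Matrix (Fin (d i)) (Fin (d i)) k) - 1))) := by
      rw [keyD, pR_sub, pR_add, pR_neg, pR_phi e ν N hc hi ho hN,
        pR_zero_of_FR e ν (FR_mono e (by omega) (FR_rm e ν hc hi hsubQ' hufb)),
        pR_zero_of_FR e ν (FR_lm e ν hc hi hufb hsubQ)]
      simp
    have hdiff : pR e ν r (Q - Q') = pR e ν r (Q - N) - pR e ν r (Q' - N) := by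
      rw [show Q - Q' = (Q - N) - (Q' - N) from by abel, pR_sub]
    have hmem : (N + (pR e ν r (Q - N) - pR e ν r (Q' - N))) ∈ E :=
      E_comb N E hE2 (E_proj e ν N E hE1 hE2 hEg hQ' r) (E_proj e ν N E hE1 hE2 hEg hQ r)
    have hQeq : (N + (pR e ν r (Q - N) - pR e ν r (Q' - N))) = N := by
      apply hEu _ hmem N hE1 0
        (-(pB e ν r (fun i => (↑(u i) : Matrix (Fin (d i)) (Fin (d i)) k) - 1)))
      · intro i s t hst
        show e t i * (0 : ∀ i : I, Matrix (Fin (d i)) (Fin (d i)) k) i * e s i = 0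
        simp
      · intro i s t hst
        exact FB_neg e (pB_FB e ν hi ho _) i s t (by omega)
      · show (N + (pR e ν r (Q - N) - pR e ν r (Q' - N))) + phi N 0
          = N + phi N (-(pB e ν r (fun i => (↑(u i) : Matrix (Fin (d i)) (Fin (d i)) k) - 1)))
        rw [phi_zero, add_zero, ← hdiff, hproj, ← phi_neg]
    have hq0 : pR e ν r (Q - N) - pR e ν r (Q' - N) = 0 := by
      have h14 := hQeq
      rwa [add_eq_left] at h14
    have hphi0 : phi N (pB e ν r (fun i => (↑(u i) : Matrix (Fin (d i)) (Fin (d i)) k) - 1))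
        = 0 := by
      have h12 : pR e ν r (Q - Q') = 0 := by rw [hdiff, hq0]
      have h13 := hproj
      rw [h12] at h13
      exact neg_eq_zero.mp h13.symm
    have hpB0 : pB e ν r (fun i => (↑(u i) : Matrix (Fin (d i)) (Fin (d i)) k) - 1) = 0 :=
      phi_inj e ν N hc hi ho hN hdir (FB_mono e hr (pB_FB e ν hi ho _)) hphi0
    have hnext : FB e (r + 1) (fun i => (↑(u i) : Matrix (Fin (d i)) (Fin (d i)) k) - 1) := by
      have h13 := pB_remainder e ν hc hi ho hufb
      rw [hpB0, sub_zero] at h13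
      exact h13
    exact ih (r + 1) (by omega) (by omega) u Q Q' hQ hQ' hnext hact

end SliceAux

end SliceAux4

/- STATEMENT 17 (Proposition 2.5 (ii)): over a finite field, for `N` block diagonal with
blocks `N_s` satisfying `Hom_Q(N_t, N_s) = 0` for `s < t`, the unipotent radical `U_d`
(elements of `G_d` that are identity plus strictly lower triangular) acts on the affine
space `Y_N`, and any complement `E_N` of `φ(u_d)` in `Y_N` compatible with the block
decomposition meets every `U_d`-orbit in `Y_N` in exactly one point; in particular the
`U_d`-action on `Y_N` is free and `|E_N| ⋅ |U_d| = |Y_N|`. -/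
theorem slice_meets_unipotent_orbits {k : Type} [Field k] [Fintype k]
    {I A : Type} [Fintype I] [Fintype A] (src tgt : A → I)
    (d : I → ℕ) (ν : ℕ) (N : CRep src tgt k d)
    (e : ℕ → ∀ i : I, Matrix (Fin (d i)) (Fin (d i)) k)
    (hcomplete : ∀ i, ∑ s ∈ Finset.range ν, e s i = 1)
    (hidem : ∀ s i, e s i * e s i = e s i)
    (horth : ∀ s t i, s ≠ t → e s i * e t i = 0)
    (hNdiag : ∀ (a : A) (s t : ℕ), s ≠ t → e t (tgt a) * N a * e s (src a) = 0)
    -- Hom_Q(N_t, N_s) = 0 for s < t, in terms of block-supported morphisms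
    (hdirected : ∀ s t : ℕ, s < t →
      ∀ f : ∀ i : I, Matrix (Fin (d i)) (Fin (d i)) k,
        (∀ i, e s i * f i * e t i = f i) →
        (∀ a : A, f (tgt a) * N a = N a * f (src a)) → f = 0)
    (E : Set (CRep src tgt k d))
    (hEsub : ∀ P ∈ E, ∀ (a : A) (s t : ℕ), s ≤ t →
      e t (tgt a) * (P a - N a) * e s (src a) = 0)
    (hEaff : N ∈ E ∧ ∀ P ∈ E, ∀ P' ∈ E, ∀ c : k, (N + c • (P - N) + (P' - N)) ∈ E)
    (hEgraded : ∀ P ∈ E, ∀ s t : ℕ,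
      (fun a => N a + e t (tgt a) * (P a - N a) * e s (src a)) ∈ E)
    (hEspan : ∀ P : CRep src tgt k d,
      (∀ (a : A) (s t : ℕ), s ≤ t → e t (tgt a) * (P a - N a) * e s (src a) = 0) →
      ∃ Q ∈ E, ∃ ξ : ∀ i : I, Matrix (Fin (d i)) (Fin (d i)) k,
        (∀ (i : I) (s t : ℕ), s ≤ t → e t i * ξ i * e s i = 0) ∧
        P = Q + fun a => ξ (tgt a) * N a - N a * ξ (src a))
    (hEunique : ∀ Q ∈ E, ∀ Q' ∈ E,
      ∀ ξ ξ' : ∀ i : I, Matrix (Fin (d i)) (Fin (d i)) k,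
        (∀ (i : I) (s t : ℕ), s ≤ t → e t i * ξ i * e s i = 0) →
        (∀ (i : I) (s t : ℕ), s ≤ t → e t i * ξ' i * e s i = 0) →
        (Q + fun a => ξ (tgt a) * N a - N a * ξ (src a))
          = (Q' + fun a => ξ' (tgt a) * N a - N a * ξ' (src a)) → Q = Q') :
    -- Y_N and U_d :
    (∀ P ∈ {P : CRep src tgt k d | ∀ (a : A) (s t : ℕ), s ≤ t →
          e t (tgt a) * (P a - N a) * e s (src a) = 0},
      ∃! Q : CRep src tgt k d, Q ∈ E ∧
        ∃ u : Gd k d, (∀ (i : I) (s t : ℕ), s ≤ t →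
            e t i * ((u i : Matrix (Fin (d i)) (Fin (d i)) k) - 1) * e s i = 0) ∧
          gact src tgt u P = Q)
    ∧
    (∀ u : Gd k d, (∀ (i : I) (s t : ℕ), s ≤ t →
        e t i * ((u i : Matrix (Fin (d i)) (Fin (d i)) k) - 1) * e s i = 0) →
      ∀ P ∈ {P : CRep src tgt k d | ∀ (a : A) (s t : ℕ), s ≤ t →
          e t (tgt a) * (P a - N a) * e s (src a) = 0},
        gact src tgt u P = P → u = 1)
    ∧
    E.ncard * {u : Gd k d | ∀ (i : I) (s t : ℕ), s ≤ t →
        e t i * ((u i : Matrix (Fin (d i)) (Fin (d i)) k) - 1) * e s i = 0}.ncard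
      = {P : CRep src tgt k d | ∀ (a : A) (s t : ℕ), s ≤ t →
          e t (tgt a) * (P a - N a) * e s (src a) = 0}.ncard := by
  classical
  have hYiff : ∀ P : CRep src tgt k d,
      (∀ (a : A) (s t : ℕ), s ≤ t → e t (tgt a) * (P a - N a) * e s (src a) = 0) ↔
      SliceAux.FR e 1 (P - N) := by
    intro P
    constructor
    · intro h a s t hst; exact h a s t (by omega)
    · intro h a s t hst; exact h a s t (by omega)
  have hUiff : ∀ u : Gd k d,
      (∀ (i : I) (s t : ℕ), s ≤ t →
        e t i * ((u i : Matrix (Fin (d i)) (Fin (d i)) k) - 1) * e s i = 0) ↔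
      SliceAux.FB e 1 (fun i => (↑(u i) : Matrix (Fin (d i)) (Fin (d i)) k) - 1) := by
    intro u
    constructor
    · intro h i s t hst; exact h i s t (by omega)
    · intro h i s t hst; exact h i s t (by omega)
  have hEY : ∀ Q ∈ E, SliceAux.FR e 1 (Q - N) := fun Q hQ => (hYiff Q).mp (hEsub Q hQ)
  have hexists : ∀ P : CRep src tgt k d, SliceAux.FR e 1 (P - N) →
      ∃ u : Gd k d,
        SliceAux.FB e 1 (fun i => (↑(u i) : Matrix (Fin (d i)) (Fin (d i)) k) - 1)
        ∧ gact src tgt u P ∈ E := by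
    intro P hP
    exact SliceAux.ex_main e ν N hcomplete hidem horth hNdiag E hEaff.1 hEaff.2 hEgraded
      hEspan ν 1 (by omega) (by omega) P N hP hEaff.1 hP
  have huniq : ∀ (u : Gd k d) (Q Q' : CRep src tgt k d), Q ∈ E → Q' ∈ E →
      SliceAux.FB e 1 (fun i => (↑(u i) : Matrix (Fin (d i)) (Fin (d i)) k) - 1) →
      gact src tgt u Q = Q' →
      (∀ i, (↑(u i) : Matrix (Fin (d i)) (Fin (d i)) k) = 1) ∧ Q = Q' := by
    intro u Q Q' hQ hQ' hu hact
    exact SliceAux.uniq_main e ν N hcomplete hidem horth hNdiag E hdirected hEaff.1 hEaff.2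
      hEgraded hEsub hEunique ν 1 (by omega) (by omega) u Q Q' hQ hQ' hu hact
  refine ⟨?_, ?_, ?_⟩
  · -- each orbit meets E exactly once
    intro P hP
    have hP' : SliceAux.FR e 1 (P - N) := (hYiff P).mp hP
    obtain ⟨u, hu, huP⟩ := hexists P hP'
    refine ⟨gact src tgt u P, ⟨huP, u, (hUiff u).mpr hu, rfl⟩, ?_⟩
    rintro Q' ⟨hQ'E, u', hu', rfl⟩
    have hu'FB := (hUiff u').mp hu'
    have hw : SliceAux.FB e 1
        (fun i => (↑(((u * u'⁻¹)) i) : Matrix (Fin (d i)) (Fin (d i)) k) - 1) :=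
      SliceAux.U_mul e ν hcomplete hidem horth hu
        (SliceAux.U_inv e ν hcomplete hidem horth hu'FB)
    have hact : gact src tgt (u * u'⁻¹) (gact src tgt u' P) = gact src tgt u P := by
      rw [← SliceAux.gact_mul, show u * u'⁻¹ * u' = u from by group]
    exact (huniq (u * u'⁻¹) (gact src tgt u' P) (gact src tgt u P) hQ'E huP hw hact).2
  · -- freeness
    intro u hu P hP hfix
    have hP' := (hYiff P).mp hP
    have huFB := (hUiff u).mp hu
    obtain ⟨v, hv, hvP⟩ := hexists P hP'
    have hw : SliceAux.FB e 1
        (fun i => (↑((v * u * v⁻¹) i) : Matrix (Fin (d i)) (Fin (d i)) k) - 1) :=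
      SliceAux.U_mul e ν hcomplete hidem horth
        (SliceAux.U_mul e ν hcomplete hidem horth hv huFB)
        (SliceAux.U_inv e ν hcomplete hidem horth hv)
    have hact : gact src tgt (v * u * v⁻¹) (gact src tgt v P) = gact src tgt v P := by
      rw [← SliceAux.gact_mul, show v * u * v⁻¹ * v = v * u from by group,
        SliceAux.gact_mul, hfix]
    have h1 := (huniq (v * u * v⁻¹) (gact src tgt v P) (gact src tgt v P) hvP hvP hw hact).1
    have h2 : v * u * v⁻¹ = 1 := funext fun i => Units.ext (by rw [h1 i]; rfl)
    calc u = v⁻¹ * (v * u * v⁻¹) * v := by group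
    _ = 1 := by rw [h2]; group
  · -- cardinality
    set Us : Set (Gd k d) := {u : Gd k d | ∀ (i : I) (s t : ℕ), s ≤ t →
        e t i * ((u i : Matrix (Fin (d i)) (Fin (d i)) k) - 1) * e s i = 0} with hUsdef
    set Ys : Set (CRep src tgt k d) := {P : CRep src tgt k d | ∀ (a : A) (s t : ℕ), s ≤ t →
        e t (tgt a) * (P a - N a) * e s (src a) = 0} with hYsdef
    have hmemY : ∀ (Q : CRep src tgt k d) (u : Gd k d), Q ∈ E → u ∈ Us →
        gact src tgt u⁻¹ Q ∈ Ys := by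
      intro Q u hQ hu
      have h1 : SliceAux.FB e 1
          (fun i => (↑((u⁻¹ i)) : Matrix (Fin (d i)) (Fin (d i)) k) - 1) :=
        SliceAux.U_inv e ν hcomplete hidem horth ((hUiff u).mp hu)
      have h2 := SliceAux.Y_stab e ν N hcomplete hidem horth hNdiag
        (u := u⁻¹) h1 (hEY Q hQ)
      exact (hYiff _).mpr h2
    let f : ↥E × ↥Us → ↥Ys := fun p =>
      ⟨gact src tgt (↑p.2 : Gd k d)⁻¹ (↑p.1), hmemY _ _ p.1.2 p.2.2⟩
    have hinj : Function.Injective f := by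
      rintro ⟨⟨Q, hQ⟩, ⟨u, hu⟩⟩ ⟨⟨Q', hQ'⟩, ⟨u', hu'⟩⟩ hfeq
      have heq : gact src tgt u⁻¹ Q = gact src tgt u'⁻¹ Q' := congrArg Subtype.val hfeq
      have hact : gact src tgt (u' * u⁻¹) Q = Q' := by
        rw [SliceAux.gact_mul, heq, ← SliceAux.gact_mul,
          show u' * u'⁻¹ = 1 from by group, SliceAux.gact_one]
      have hw : SliceAux.FB e 1
          (fun i => (↑((u' * u⁻¹) i) : Matrix (Fin (d i)) (Fin (d i)) k) - 1) :=
        SliceAux.U_mul e ν hcomplete hidem horth ((hUiff u').mp hu')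
          (SliceAux.U_inv e ν hcomplete hidem horth ((hUiff u).mp hu))
      obtain ⟨hcoe1, hQQ'⟩ := huniq (u' * u⁻¹) Q Q' hQ hQ' hw hact
      have huu : u' * u⁻¹ = 1 := funext fun i => Units.ext (by rw [hcoe1 i]; rfl)
      have huu' : u = u' := by
        have : u' = (u' * u⁻¹) * u := by group
        rw [huu] at this
        rw [this]
        group
      exact Prod.ext (Subtype.ext hQQ') (Subtype.ext huu')
    have hsurj : Function.Surjective f := by
      rintro ⟨P, hP⟩
      obtain ⟨u, hu, huP⟩ := hexists P ((hYiff P).mp hP)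
      refine ⟨⟨⟨gact src tgt u P, huP⟩, ⟨u, (hUiff u).mpr hu⟩⟩, ?_⟩
      apply Subtype.ext
      show gact src tgt u⁻¹ (gact src tgt u P) = P
      rw [← SliceAux.gact_mul, show u⁻¹ * u = 1 from by group, SliceAux.gact_one]
    have hcard := Nat.card_congr (Equiv.ofBijective f ⟨hinj, hsurj⟩)
    rw [Nat.card_prod] at hcard
    rw [Nat.card_coe_set_eq, Nat.card_coe_set_eq, Nat.card_coe_set_eq] at hcard
    exact hcard
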